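/- arXiv:2203.02724 — 2 statements merged into one kernel-verified Lean document; each statement's English description precedes it below -/
import Mathlib

section
/- If I = (m, m+1, s, t) is a minimal normalized scheduling instance (n = m + 1 tasks on m processors), then its LPT approximation ratio satisfies ρ_I ≤ ρ_m. -/
open Finset

/-- A scheduling instance on uniform processors: `m` processors with positive
speeds `s 1, …, s m`, and `n` tasks with positive sizes `t 1 ≥ … ≥ t n`
(tasks are given in non-increasing order of size, as assumed for LPT). -/
structure SchedInstance where
  m : ℕ
  n : ℕ
  s : ℕ → ℝ
  t : ℕ → ℝ
  hm : 1 ≤ m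
  hn : 1 ≤ n
  hs : ∀ p, 1 ≤ p → p ≤ m → 0 < s p
  ht : ∀ i, 1 ≤ i → i ≤ n → 0 < t i
  tsorted : ∀ i j, 1 ≤ i → i ≤ j → j ≤ n → t j ≤ t i

namespace SchedInstance

variable (I : SchedInstance)

/-- The set of processor indices `{1, …, m}`. -/
def procs : Finset ℕ := Finset.Icc 1 I.m

/-- The set of task indices `{1, …, n}`. -/
def tasks : Finset ℕ := Finset.Icc 1 I.n

lemma procs_nonempty : I.procs.Nonempty := Finset.nonempty_Icc.mpr I.hm

/-- A schedule assigns every task `i ∈ {1,…,n}` a processor `A i ∈ {1,…,m}`. -/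
def IsSchedule (A : ℕ → ℕ) : Prop := ∀ i ∈ I.tasks, A i ∈ I.procs

/-- Total size of the tasks assigned by `A` to processor `p`. -/
noncomputable def load (A : ℕ → ℕ) (p : ℕ) : ℝ :=
  ∑ i ∈ I.tasks.filter (fun i => A i = p), I.t i

/-- The makespan of a schedule `A` : the largest completion time
`(Σ_{A i = p} t i) / s p` over the processors `p`. -/
noncomputable def makespan (A : ℕ → ℕ) : ℝ :=
  I.procs.sup' I.procs_nonempty (fun p => I.load A p / I.s p)

/-- `OPT(I)`: the optimal (minimum) makespan over all schedules. -/
noncomputable def opt : ℝ := sInf {r | ∃ A, I.IsSchedule A ∧ I.makespan A = r}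

/-- The completion time of processor `p` if task `i` is added to it while the
current workloads are `w`. -/
noncomputable def cost (w : ℕ → ℝ) (i p : ℕ) : ℝ := (w p + I.t i) / I.s p

/-- The processor the LPT rule chooses for task `i` given current workloads `w` :
the smallest-index processor minimizing `(w p + t i) / s p`. -/
noncomputable def choose (w : ℕ → ℝ) (i : ℕ) : ℕ :=
  (I.procs.filter
    (fun p => I.cost w i p = I.procs.inf' I.procs_nonempty (I.cost w i))).min'
    (by
      obtain ⟨p, hp, hpe⟩ := Finset.exists_mem_eq_inf' I.procs_nonempty (I.cost w i)
      exact ⟨p, Finset.mem_filter.mpr ⟨hp, hpe.symm⟩⟩)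

/-- `lptW k p` : the workload of processor `p` after the LPT algorithm has
assigned tasks `1, …, k` (in this order). -/
noncomputable def lptW : ℕ → ℕ → ℝ
  | 0, _ => 0
  | (k + 1), p =>
      lptW k p + if I.choose (lptW k) (k + 1) = p ∧ k + 1 ≤ I.n then I.t (k + 1) else 0

/-- `A_I` : the LPT assignment; task `i` goes to the least-index processor
minimizing the resulting completion time, given the previous assignments. -/
noncomputable def lptA (i : ℕ) : ℕ := I.choose (I.lptW (i - 1)) i

/-- `LPT(I)` : the makespan of the LPT schedule. -/
noncomputable def lptTime : ℝ := I.makespan I.lptA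

/-- `ρ_I = LPT(I) / OPT(I)` : the approximation ratio of LPT on instance `I`. -/
noncomputable def ratio : ℝ := I.lptTime / I.opt

/-- `I` is normalized: `OPT(I) = 1`, speeds are non-increasing, and the
smallest task has size `t n = 1`. -/
def Normalized : Prop :=
  I.opt = 1 ∧ (∀ p q, 1 ≤ p → p ≤ q → q ≤ I.m → I.s q ≤ I.s p) ∧ I.t I.n = 1

/-- `I` is minimal: every strictly smaller instance has a strictly smaller
LPT approximation ratio. -/
def Minimal : Prop :=
  ∀ J : SchedInstance, J.m ≤ I.m → J.n ≤ I.n →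
    ¬(J.m = I.m ∧ J.n = I.n) → J.ratio < I.ratio

/-- `T_I(p)` : the tasks assigned to processor `p` by the LPT schedule. -/
noncomputable def T (p : ℕ) : Finset ℕ := I.tasks.filter (fun i => I.lptA i = p)

/-- `T'_I(p) = T_I(p) \ {n}` : the LPT tasks of `p`, without the last task. -/
noncomputable def T' (p : ℕ) : Finset ℕ := (I.T p).erase I.n

/-- `w'_I(p)` : the workload of `p` in the LPT schedule without the last task. -/
noncomputable def w' (p : ℕ) : ℝ := ∑ i ∈ I.T' p, I.t i

/-- `T*(p)` for a schedule `A` : the tasks assigned to processor `p` by `A`. -/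
noncomputable def Tstar (A : ℕ → ℕ) (p : ℕ) : Finset ℕ :=
  I.tasks.filter (fun i => A i = p)

/-- `w*(p)` for a schedule `A` : the workload of processor `p` under `A`. -/
noncomputable def wstar (A : ℕ → ℕ) (p : ℕ) : ℝ := ∑ i ∈ I.Tstar A p, I.t i

/-- `A` is an optimal schedule whose workloads satisfy `w*(1) ≥ … ≥ w*(m)`. -/
def IsSortedOptimal (A : ℕ → ℕ) : Prop :=
  I.IsSchedule A ∧ I.makespan A = I.opt ∧
    ∀ p q, 1 ≤ p → p ≤ q → q ≤ I.m → I.wstar A q ≤ I.wstar A p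

/-- Processor `p` dominates processor `q` (with respect to the optimal
schedule `A`): `s p ≤ s q` and there is `f : T*(q) → T'(p)` with
`t i ≥ Σ_{f j = i} t j` for every `i ∈ T'(p)`. -/
def Dominates (A : ℕ → ℕ) (p q : ℕ) : Prop :=
  I.s p ≤ I.s q ∧ ∃ f : ℕ → ℕ,
    (∀ j ∈ I.Tstar A q, f j ∈ I.T' p) ∧
    ∀ i ∈ I.T' p, (∑ j ∈ (I.Tstar A q).filter (fun j => f j = i), I.t j) ≤ I.t i

end SchedInstance

/-- The polynomial `P_m(x) = 2x^m − x^{m−1} − ⋯ − x − 2`. -/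
noncomputable def Pm (m : ℕ) (x : ℝ) : ℝ := 2 * x ^ m - (∑ k ∈ Finset.Ico 1 m, x ^ k) - 2
namespace SchedInstance

variable (I : SchedInstance)

lemma spos {p : ℕ} (hp : p ∈ I.procs) : 0 < I.s p := by
  rw [procs, Finset.mem_Icc] at hp; exact I.hs p hp.1 hp.2

lemma tpos {i : ℕ} (hi : i ∈ I.tasks) : 0 < I.t i := by
  rw [tasks, Finset.mem_Icc] at hi; exact I.ht i hi.1 hi.2

lemma choose_spec (w : ℕ → ℝ) (i : ℕ) :
    I.choose w i ∈ I.procs ∧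
      I.cost w i (I.choose w i) = I.procs.inf' I.procs_nonempty (I.cost w i) := by
  have h : I.choose w i ∈ I.procs.filter
      (fun p => I.cost w i p = I.procs.inf' I.procs_nonempty (I.cost w i)) := by
    rw [choose]; exact Finset.min'_mem _ _
  exact Finset.mem_filter.mp h

lemma choose_mem (w : ℕ → ℝ) (i : ℕ) : I.choose w i ∈ I.procs := (I.choose_spec w i).1

lemma cost_choose_le (w : ℕ → ℝ) (i : ℕ) {p : ℕ} (hp : p ∈ I.procs) :
    I.cost w i (I.choose w i) ≤ I.cost w i p := by
  rw [(I.choose_spec w i).2]; exact Finset.inf'_le _ hp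

lemma choose_le (w : ℕ → ℝ) (i : ℕ) {p : ℕ} (hp : p ∈ I.procs)
    (hle : I.cost w i p ≤ I.cost w i (I.choose w i)) : I.choose w i ≤ p := by
  rw [choose]
  apply Finset.min'_le
  refine Finset.mem_filter.mpr ⟨hp, le_antisymm ?_ (Finset.inf'_le _ hp)⟩
  calc I.cost w i p ≤ I.cost w i (I.choose w i) := hle
    _ = I.procs.inf' I.procs_nonempty (I.cost w i) := (I.choose_spec w i).2

lemma lptW_succ (k p : ℕ) :
    I.lptW (k + 1) p = I.lptW k p +
      if I.choose (I.lptW k) (k + 1) = p ∧ k + 1 ≤ I.n then I.t (k + 1) else 0 := by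
  rw [lptW]

lemma lptA_def (i : ℕ) : I.lptA i = I.choose (I.lptW (i - 1)) i := rfl

lemma lptW_eq_sum (k p : ℕ) :
    I.lptW k p = ∑ i ∈ (Finset.Icc 1 (min k I.n)).filter (fun i => I.lptA i = p), I.t i := by
  induction k with
  | zero => simp [lptW]
  | succ k ih =>
    rw [lptW_succ, ih]
    by_cases hk : k + 1 ≤ I.n
    · have hmin : min (k+1) I.n = k + 1 := min_eq_left hk
      have hmin' : min k I.n = k := min_eq_left (by omega)
      rw [hmin, hmin']
      have hins : Finset.Icc 1 (k+1) = insert (k+1) (Finset.Icc 1 k) := by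
        ext x; simp [Finset.mem_Icc, Finset.mem_insert]; omega
      rw [hins, Finset.filter_insert]
      have hA : I.lptA (k+1) = I.choose (I.lptW k) (k+1) := by
        rw [lptA_def]; norm_num
      by_cases hc : I.lptA (k+1) = p
      · rw [if_pos hc, Finset.sum_insert (by simp [Finset.mem_Icc])]
        rw [if_pos ⟨by rw [← hA, hc], hk⟩]; ring
      · rw [if_neg hc, if_neg (by rw [← hA]; tauto)]; ring
    · have hmin : min (k+1) I.n = I.n := min_eq_right (by omega)
      have hmin' : min k I.n = I.n := min_eq_right (by omega)
      rw [hmin, hmin', if_neg (by tauto)]; ring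

lemma load_lpt (p : ℕ) : I.load I.lptA p = I.lptW I.n p := by
  rw [load, lptW_eq_sum, min_self, tasks]

lemma lptW_nonneg (k p : ℕ) : 0 ≤ I.lptW k p := by
  rw [lptW_eq_sum]
  apply Finset.sum_nonneg
  intro i hi
  simp only [Finset.mem_filter, Finset.mem_Icc] at hi
  exact le_of_lt (I.ht i hi.1.1 (by omega))

lemma lptW_mono {k l : ℕ} (h : k ≤ l) (p : ℕ) : I.lptW k p ≤ I.lptW l p := by
  induction l with
  | zero =>
    have : k = 0 := by omega
    subst this; exact le_refl _
  | succ l ih =>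
    rcases Nat.lt_or_ge k (l+1) with h' | h'
    · refine le_trans (ih (by omega)) ?_
      rw [lptW_succ]
      have : (0:ℝ) ≤ if I.choose (I.lptW l) (l + 1) = p ∧ l + 1 ≤ I.n then I.t (l + 1) else 0 := by
        split
        · next hcond => exact le_of_lt (I.ht _ (by omega) hcond.2)
        · exact le_refl 0
      linarith
    · have : k = l + 1 := by omega
      subst this; rfl

end SchedInstance
namespace SchedInstance

variable (I : SchedInstance)

lemma load_nonneg (A : ℕ → ℕ) (p : ℕ) : 0 ≤ I.load A p := by
  apply Finset.sum_nonneg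
  intro i hi
  exact le_of_lt (I.tpos (Finset.mem_filter.mp hi).1)

lemma le_makespan {A : ℕ → ℕ} {p : ℕ} (hp : p ∈ I.procs) :
    I.load A p / I.s p ≤ I.makespan A := by
  rw [makespan]; exact Finset.le_sup' (fun q => I.load A q / I.s q) hp

lemma load_le_makespan_mul {A : ℕ → ℕ} {p : ℕ} (hp : p ∈ I.procs) :
    I.load A p ≤ I.makespan A * I.s p := by
  have h1 : I.load A p / I.s p ≤ I.makespan A := I.le_makespan hp
  have h2 := I.spos hp
  calc I.load A p = I.load A p / I.s p * I.s p := by field_simp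
    _ ≤ I.makespan A * I.s p := by
        exact mul_le_mul_of_nonneg_right h1 (le_of_lt h2)

lemma makespan_nonneg (A : ℕ → ℕ) : 0 ≤ I.makespan A := by
  obtain ⟨p, hp⟩ := I.procs_nonempty
  calc (0:ℝ) ≤ I.load A p / I.s p := div_nonneg (I.load_nonneg A p) (le_of_lt (I.spos hp))
    _ ≤ I.makespan A := I.le_makespan hp

lemma single_le_load {A : ℕ → ℕ} {i p : ℕ} (hi : i ∈ I.tasks) (hA : A i = p) :
    I.t i ≤ I.load A p := by
  apply Finset.single_le_sum (f := fun j => I.t j)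
  · intro j hj; exact le_of_lt (I.tpos (Finset.mem_filter.mp hj).1)
  · exact Finset.mem_filter.mpr ⟨hi, hA⟩

lemma pair_le_load {A : ℕ → ℕ} {i j p : ℕ} (hi : i ∈ I.tasks) (hj : j ∈ I.tasks)
    (hij : i ≠ j) (hAi : A i = p) (hAj : A j = p) :
    I.t i + I.t j ≤ I.load A p := by
  have hsub : {i, j} ⊆ I.tasks.filter (fun x => A x = p) := by
    intro x hx
    rcases Finset.mem_insert.mp hx with h | h
    · subst h; exact Finset.mem_filter.mpr ⟨hi, hAi⟩
    · rw [Finset.mem_singleton] at h; subst h; exact Finset.mem_filter.mpr ⟨hj, hAj⟩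
  calc I.t i + I.t j = ∑ x ∈ ({i, j} : Finset ℕ), I.t x := (Finset.sum_pair hij).symm
    _ ≤ I.load A p := by
        apply Finset.sum_le_sum_of_subset_of_nonneg hsub
        intro x hx _
        exact le_of_lt (I.tpos (Finset.mem_filter.mp hx).1)

lemma makespan_pos {A : ℕ → ℕ} (hA : I.IsSchedule A) : 0 < I.makespan A := by
  have h1 : (1:ℕ) ∈ I.tasks := by
    rw [tasks, Finset.mem_Icc]; exact ⟨le_refl _, I.hn⟩
  have hp : A 1 ∈ I.procs := hA 1 h1
  have ht1 : 0 < I.t 1 := I.tpos h1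
  have hload : I.t 1 ≤ I.load A (A 1) := I.single_le_load h1 rfl
  calc (0:ℝ) < I.t 1 / I.s (A 1) := div_pos ht1 (I.spos hp)
    _ ≤ I.load A (A 1) / I.s (A 1) := by
        gcongr <;> first
          | exact (I.spos hp).le
          | exact I.single_le_load h1 rfl
    _ ≤ I.makespan A := I.le_makespan hp

lemma makespan_lb (A : ℕ → ℕ) : I.t 1 / (I.procs.sup' I.procs_nonempty I.s) ≤ I.makespan A
    ∨ ¬ I.IsSchedule A := by
  by_cases hA : I.IsSchedule A
  · left
    have h1 : (1:ℕ) ∈ I.tasks := by rw [tasks, Finset.mem_Icc]; exact ⟨le_refl _, I.hn⟩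
    have hp : A 1 ∈ I.procs := hA 1 h1
    have hssup : I.s (A 1) ≤ I.procs.sup' I.procs_nonempty I.s := Finset.le_sup' _ hp
    have hspos : 0 < I.s (A 1) := I.spos hp
    have hsuppos : 0 < I.procs.sup' I.procs_nonempty I.s := lt_of_lt_of_le hspos hssup
    have ht1 : 0 < I.t 1 := I.tpos h1
    calc I.t 1 / (I.procs.sup' I.procs_nonempty I.s) ≤ I.t 1 / I.s (A 1) := by
          apply div_le_div_of_nonneg_left (le_of_lt ht1) hspos hssup
      _ ≤ I.load A (A 1) / I.s (A 1) := by
          gcongr <;> first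
            | exact (I.spos hp).le
            | exact I.single_le_load h1 rfl
      _ ≤ I.makespan A := I.le_makespan hp
  · right; exact hA

/-- The set of achievable makespans. -/
def mset : Set ℝ := {r | ∃ A, I.IsSchedule A ∧ I.makespan A = r}

lemma mset_nonempty : I.mset.Nonempty := by
  refine ⟨I.makespan (fun _ => 1), fun _ => 1, ?_, rfl⟩
  intro i _
  rw [procs, Finset.mem_Icc]; exact ⟨le_refl _, I.hm⟩

lemma mset_bddBelow : BddBelow I.mset := by
  refine ⟨0, ?_⟩
  rintro r ⟨A, _, rfl⟩
  exact I.makespan_nonneg A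

lemma mset_finite : I.mset.Finite := by
  classical
  have hsub : I.mset ⊆ I.makespan ''
      ↑((I.tasks.pi (fun _ => I.procs)).image
        (fun f i => if h : i ∈ I.tasks then f i h else 1)) := by
    rintro r ⟨A, hA, rfl⟩
    refine ⟨fun i => if h : i ∈ I.tasks then A i else 1, ?_, ?_⟩
    · simp only [Finset.coe_image, Set.mem_image, Finset.mem_coe]
      refine ⟨fun i _ => A i, ?_, rfl⟩
      rw [Finset.mem_pi]
      intro i hi; exact hA i hi
    · unfold makespan
      apply Finset.sup'_congr _ rfl
      intro p _
      congr 1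
      unfold load
      apply Finset.sum_congr
      · apply Finset.filter_congr
        intro i hi
        simp [hi]
      · intros; rfl
  exact Set.Finite.subset (Set.Finite.image _ (Finset.finite_toSet _)) hsub

lemma opt_mem : ∃ A, I.IsSchedule A ∧ I.makespan A = I.opt := by
  have := Set.Nonempty.csInf_mem I.mset_nonempty I.mset_finite
  exact this

lemma opt_le {A : ℕ → ℕ} (hA : I.IsSchedule A) : I.opt ≤ I.makespan A :=
  csInf_le I.mset_bddBelow ⟨A, hA, rfl⟩

lemma opt_pos : 0 < I.opt := by
  obtain ⟨A, hA, hAm⟩ := I.opt_mem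
  rw [← hAm]
  exact I.makespan_pos hA

end SchedInstance
namespace SchedInstance

/-- Truncation: drop the last task. -/
def trunc (I : SchedInstance) (h : 2 ≤ I.n) : SchedInstance where
  m := I.m
  n := I.n - 1
  s := I.s
  t := I.t
  hm := I.hm
  hn := by omega
  hs := I.hs
  ht := fun i h1 h2 => I.ht i h1 (by omega)
  tsorted := fun i j h1 h2 h3 => I.tsorted i j h1 h2 (by omega)

variable (I : SchedInstance)

lemma trunc_procs (h : 2 ≤ I.n) : (I.trunc h).procs = I.procs := rfl

lemma trunc_choose (h : 2 ≤ I.n) : (I.trunc h).choose = I.choose := rfl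

lemma trunc_lptW (h : 2 ≤ I.n) : ∀ k, k ≤ I.n - 1 → ∀ p,
    (I.trunc h).lptW k p = I.lptW k p := by
  intro k
  induction k with
  | zero => intro _ p; rfl
  | succ k ih =>
    intro hk p
    rw [lptW_succ, lptW_succ]
    have hW : (I.trunc h).lptW k = I.lptW k := by
      funext q; exact ih (by omega) q
    rw [hW, trunc_choose]
    have htr : (I.trunc h).n = I.n - 1 := rfl
    have hcond : (I.choose (I.lptW k) (k + 1) = p ∧ k + 1 ≤ (I.trunc h).n)
        ↔ (I.choose (I.lptW k) (k + 1) = p ∧ k + 1 ≤ I.n) := by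
      constructor
      · rintro ⟨hc1, hc2⟩; rw [htr] at hc2; exact ⟨hc1, by omega⟩
      · rintro ⟨hc1, _⟩; refine ⟨hc1, ?_⟩; rw [htr]; omega
    congr 1
    exact if_congr hcond rfl rfl

lemma trunc_lptA (h : 2 ≤ I.n) {i : ℕ} (hi : i ≤ I.n - 1) :
    (I.trunc h).lptA i = I.lptA i := by
  rw [lptA_def, lptA_def, trunc_choose]
  have hW : (I.trunc h).lptW (i-1) = I.lptW (i-1) :=
    funext (fun p => trunc_lptW I h (i-1) (by omega) p)
  rw [hW]

lemma trunc_load_lpt (h : 2 ≤ I.n) (p : ℕ) :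
    (I.trunc h).load (I.trunc h).lptA p = I.lptW (I.n - 1) p := by
  rw [load_lpt]
  show (I.trunc h).lptW (I.n - 1) p = _
  rw [trunc_lptW I h _ (le_refl _)]

/-- Deletion of the last (slowest) machine. -/
def wom (I : SchedInstance) (h : 2 ≤ I.m) : SchedInstance where
  m := I.m - 1
  n := I.n
  s := I.s
  t := I.t
  hm := by omega
  hn := I.hn
  hs := fun p h1 h2 => I.hs p h1 (by omega)
  ht := I.ht
  tsorted := I.tsorted

lemma wom_procs (h : 2 ≤ I.m) : (I.wom h).procs = I.procs.erase I.m := by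
  show Finset.Icc 1 (I.m - 1) = (Finset.Icc 1 I.m).erase I.m
  ext x
  simp only [Finset.mem_Icc, Finset.mem_erase]
  omega

lemma wom_cost (h : 2 ≤ I.m) : (I.wom h).cost = I.cost := rfl

lemma wom_cost_app (h : 2 ≤ I.m) (w : ℕ → ℝ) (i p : ℕ) :
    (I.wom h).cost w i p = I.cost w i p := rfl

lemma wom_choose (h : 2 ≤ I.m) (w : ℕ → ℝ) (i : ℕ)
    (hne : I.choose w i ≠ I.m) : (I.wom h).choose w i = I.choose w i := by
  have hq := I.choose_mem w i
  have hq' : I.choose w i ∈ (I.wom h).procs := by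
    rw [wom_procs]; exact Finset.mem_erase.mpr ⟨hne, hq⟩
  have hsub : (I.wom h).procs ⊆ I.procs := by
    rw [wom_procs]; exact Finset.erase_subset _ _
  have hinf : (I.wom h).procs.inf' (I.wom h).procs_nonempty ((I.wom h).cost w i)
      = I.procs.inf' I.procs_nonempty (I.cost w i) := by
    apply le_antisymm
    · calc (I.wom h).procs.inf' (I.wom h).procs_nonempty ((I.wom h).cost w i)
          ≤ (I.wom h).cost w i (I.choose w i) := Finset.inf'_le _ hq'
        _ = I.procs.inf' I.procs_nonempty (I.cost w i) := (I.choose_spec w i).2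
    · apply Finset.le_inf'
      intro b hb
      exact Finset.inf'_le _ (hsub hb)
  have hcw : ((I.wom h).cost w i) ((I.wom h).choose w i)
      = I.procs.inf' I.procs_nonempty (I.cost w i) := by
    rw [((I.wom h).choose_spec w i).2, hinf]
  apply le_antisymm
  · apply (I.wom h).choose_le w i hq'
    rw [wom_cost_app, wom_cost_app I h w i ((I.wom h).choose w i)]
    rw [(I.choose_spec w i).2]
    rw [← wom_cost_app I h w i ((I.wom h).choose w i), hcw]
  · apply I.choose_le w i (hsub ((I.wom h).choose_mem w i))
    rw [← wom_cost_app I h w i ((I.wom h).choose w i), hcw]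
    exact le_of_eq (I.choose_spec w i).2.symm

end SchedInstance
namespace SchedInstance

variable (I : SchedInstance)

lemma wom_lptW (h : 2 ≤ I.m) (H : ∀ j, 1 ≤ j → j ≤ I.n - 1 → I.lptA j ≠ I.m) :
    ∀ k, k ≤ I.n - 1 → ∀ p, (I.wom h).lptW k p = I.lptW k p := by
  intro k
  induction k with
  | zero => intro _ p; rfl
  | succ k ih =>
    intro hk p
    rw [lptW_succ, lptW_succ]
    have hW : (I.wom h).lptW k = I.lptW k := by
      funext q; exact ih (by omega) q
    rw [hW]
    have hch : I.choose (I.lptW k) (k + 1) ≠ I.m := by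
      have : I.lptA (k+1) = I.choose (I.lptW k) (k+1) := by
        rw [lptA_def]; norm_num
      rw [← this]
      exact H (k+1) (by omega) hk
    rw [wom_choose I h _ _ hch]
    rfl

lemma load_lpt_split (hn1 : 1 ≤ I.n) :
    (I.load I.lptA (I.lptA I.n) = I.lptW (I.n - 1) (I.lptA I.n) + I.t I.n)
    ∧ ∀ p, p ≠ I.lptA I.n → I.load I.lptA p = I.lptW (I.n - 1) p := by
  obtain ⟨n', hn'⟩ : ∃ n', I.n = n' + 1 := ⟨I.n - 1, by omega⟩
  simp only [hn', Nat.add_sub_cancel]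
  have hA : I.lptA (n' + 1) = I.choose (I.lptW n') (n' + 1) := by
    rw [lptA_def]; norm_num
  have hl : ∀ p, I.load I.lptA p = I.lptW (n' + 1) p := by
    intro p
    rw [load_lpt, hn']
  constructor
  · rw [hl, lptW_succ, if_pos ⟨hA.symm, by omega⟩]
  · intro p hp
    rw [hl, lptW_succ, if_neg]
    · rw [add_zero]
    · rintro ⟨h1, -⟩
      exact hp (by rw [hA, h1])

lemma lptA_pos_load {j : ℕ} (h1 : 1 ≤ j) (h2 : j ≤ I.n) :
    0 < I.lptW j (I.lptA j) := by
  obtain ⟨j', hj'⟩ : ∃ j', j = j' + 1 := ⟨j - 1, by omega⟩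
  subst hj'
  rw [lptW_succ]
  have hA : I.lptA (j' + 1) = I.choose (I.lptW j') (j' + 1) := by
    rw [lptA_def]; norm_num
  rw [if_pos ⟨hA.symm, h2⟩]
  have := I.lptW_nonneg j' (I.lptA (j' + 1))
  have := I.ht (j' + 1) (by omega) h2
  linarith

end SchedInstance
section Alg

open Finset

lemma alg_c_le (c : ℝ) (k : ℕ) (hk : 1 ≤ k) (hc : 1 < c)
    (hG : 2 * c ^ k ≤ (∑ j ∈ Finset.range k, c ^ j) + 1) : c ≤ 3 / 2 := by
  by_contra hlt
  push_neg at hlt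
  have hne : c ≠ 1 := by linarith
  rw [geom_sum_eq hne] at hG
  have h1 : (1:ℝ) < c ^ k := one_lt_pow₀ hc (by omega)
  have h2 : (c ^ k - 1) / (c - 1) < 2 * (c ^ k - 1) := by
    rw [div_lt_iff₀ (by linarith : (0:ℝ) < c - 1)]
    nlinarith
  linarith

lemma alg_Gm (c : ℝ) (k m : ℕ) (hk : 1 ≤ k) (hkm : k ≤ m) (hc : 1 < c)
    (hc32 : c ≤ 3 / 2)
    (hG : 2 * c ^ k ≤ (∑ j ∈ Finset.range k, c ^ j) + 1) :
    2 * c ^ m ≤ (∑ j ∈ Finset.range m, c ^ j) + 1 := by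
  have hne : c ≠ 1 := by linarith
  rw [geom_sum_eq hne] at hG ⊢
  have hck : c ^ k ≤ c ^ m := pow_le_pow_right₀ (by linarith) hkm
  have hc1 : (0:ℝ) < c - 1 := by linarith
  rw [div_add' _ _ _ (ne_of_gt hc1)] at hG ⊢
  rw [le_div_iff₀ hc1] at hG ⊢
  nlinarith

lemma Pm_le_zero_of (c : ℝ) (m : ℕ) (hm : 1 ≤ m)
    (hG : 2 * c ^ m ≤ (∑ j ∈ Finset.range m, c ^ j) + 1) : Pm m c ≤ 0 := by
  rw [Pm]
  have : ∑ j ∈ Finset.range m, c ^ j = 1 + ∑ j ∈ Finset.Ico 1 m, c ^ j := by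
    rw [Finset.range_eq_Ico, Finset.sum_eq_sum_Ico_succ_bot (by omega : 0 < m)]
    norm_num
  rw [this] at hG
  linarith

lemma le_root_of_Pm (c ρ : ℝ) (m : ℕ) (hm : 1 ≤ m) (hc : 0 < c) (hρ : 0 < ρ)
    (hPc : Pm m c ≤ 0) (hPr : Pm m ρ = 0) : c ≤ ρ := by
  by_contra hlt
  push_neg at hlt
  rw [Pm] at hPc hPr
  set SC := ∑ j ∈ Finset.Ico 1 m, c ^ j with hSC
  set SR := ∑ j ∈ Finset.Ico 1 m, ρ ^ j with hSR
  have key : ρ ^ m * SC ≤ c ^ m * SR := by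
    rw [hSC, hSR, Finset.mul_sum, Finset.mul_sum]
    apply Finset.sum_le_sum
    intro j hj
    rw [Finset.mem_Ico] at hj
    have hjm : j ≤ m := by omega
    have e1 : ρ ^ m = ρ ^ j * ρ ^ (m - j) := by
      rw [← pow_add]; congr 1; omega
    have e2 : c ^ m = c ^ j * c ^ (m - j) := by
      rw [← pow_add]; congr 1; omega
    rw [e1, e2]
    have h1 : ρ ^ (m - j) ≤ c ^ (m - j) := pow_le_pow_left₀ hρ.le hlt.le _
    have h2 : (0:ℝ) ≤ ρ ^ j := by positivity
    have h3 : (0:ℝ) ≤ c ^ j := by positivity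
    calc ρ ^ j * ρ ^ (m - j) * c ^ j = ρ ^ j * c ^ j * ρ ^ (m - j) := by ring
      _ ≤ ρ ^ j * c ^ j * c ^ (m - j) := by
          apply mul_le_mul_of_nonneg_left h1 (by positivity)
      _ = c ^ j * c ^ (m - j) * ρ ^ j := by ring
  have hpow : ρ ^ m < c ^ m := pow_lt_pow_left₀ hlt hρ.le (by omega)
  have hρm : (0:ℝ) < ρ ^ m := by positivity
  nlinarith [mul_le_mul_of_nonneg_left hPc hρm.le]

lemma one_le_root (ρ : ℝ) (m : ℕ) (hm : 1 ≤ m) (hρ : 0 < ρ) (hPr : Pm m ρ = 0) :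
    1 ≤ ρ := by
  by_contra hlt
  push_neg at hlt
  rw [Pm] at hPr
  have h1 : ρ ^ m < 1 := pow_lt_one₀ hρ.le hlt (by omega)
  have h2 : (0:ℝ) ≤ ∑ j ∈ Finset.Ico 1 m, ρ ^ j := by
    apply Finset.sum_nonneg; intro j _; positivity
  linarith

end Alg
lemma alg_Gk (c X Y : ℝ) (k' : ℕ) (S' : ℝ) (hc : 1 < c) (hX : 1 ≤ X)
    (h1 : c ^ k' * Y ≤ X + S') (h2 : c * X + c ≤ Y + 1) :
    2 * c ^ (k' + 1) ≤ (S' + c ^ k') + 1 := by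
  have hA : (1:ℝ) ≤ c ^ k' := by
    have := pow_le_pow_left₀ (by norm_num : (0:ℝ) ≤ 1) hc.le k'
    simpa using this
  have hY : c * X + c - 1 ≤ Y := by linarith
  have h3 : c ^ k' * (c * X + c - 1) ≤ X + S' :=
    le_trans (mul_le_mul_of_nonneg_left hY (by positivity)) h1
  have hpow : c ^ (k' + 1) = c ^ k' * c := pow_succ c k'
  have hq : (0:ℝ) ≤ (X - 1) * (c ^ k' * c - 1) := by
    apply mul_nonneg (by linarith)
    nlinarith
  nlinarith
namespace SchedInstance
variable (I : SchedInstance)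

lemma cost_def (w : ℕ → ℝ) (i p : ℕ) : I.cost w i p = (w p + I.t i) / I.s p := rfl

lemma trunc_s (h : 2 ≤ I.n) : (I.trunc h).s = I.s := rfl
lemma trunc_t (h : 2 ≤ I.n) : (I.trunc h).t = I.t := rfl
lemma trunc_tasks (h : 2 ≤ I.n) : (I.trunc h).tasks = Finset.Icc 1 (I.n - 1) := rfl
lemma wom_s (h : 2 ≤ I.m) : (I.wom h).s = I.s := rfl
lemma wom_load (h : 2 ≤ I.m) : (I.wom h).load = I.load := rfl
lemma wom_tasks (h : 2 ≤ I.m) : (I.wom h).tasks = I.tasks := rfl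
lemma wom_n (h : 2 ≤ I.m) : (I.wom h).n = I.n := rfl

/-- ratio is at least `c` for an instance whose LPT time is at least `c` and
whose optimum is at most 1. -/
lemma ratio_ge {J : SchedInstance} {c : ℝ} (hc : 0 < c) (h1 : c ≤ J.lptTime)
    (h2 : J.opt ≤ 1) : c ≤ J.ratio := by
  have h3 := J.opt_pos
  rw [ratio, le_div_iff₀ h3]
  calc c * J.opt ≤ c * 1 := by nlinarith
    _ ≤ J.lptTime := by linarith

end SchedInstance

theorem ratio_le_rho_of_minimal_m_add_one' (I : SchedInstance) (hn : I.n = I.m + 1)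
    (hnorm : I.Normalized) (hmin : I.Minimal)
    (ρ : ℝ) (hρpos : 0 < ρ) (hρroot : Pm I.m ρ = 0) :
    I.ratio ≤ ρ := by
  obtain ⟨hopt1, hssort, htn⟩ := hnorm
  have hρ1 : 1 ≤ ρ := one_le_root ρ I.m I.hm hρpos hρroot
  have hratio : I.ratio = I.lptTime := by rw [SchedInstance.ratio, hopt1, div_one]
  set c := I.lptTime with hcdef
  by_cases hc1 : c ≤ 1
  · rw [hratio]; linarith
  push_neg at hc1
  rw [hratio]
  have hm1 := I.hm
  have hn2 : 2 ≤ I.n := by omega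
  -- optimal schedule
  obtain ⟨A, hAsched, hAmake⟩ := I.opt_mem
  rw [hopt1] at hAmake
  have hloadle : ∀ p ∈ I.procs, I.load A p ≤ I.s p := by
    intro p hp
    have h := I.load_le_makespan_mul (A := A) hp
    rw [hAmake, one_mul] at h
    exact h
  have hfit : ∀ i ∈ I.tasks, I.t i ≤ I.s (A i) := fun i hi =>
    le_trans (I.single_le_load hi rfl) (hloadle _ (hAsched i hi))
  have hntask : I.n ∈ I.tasks := by
    rw [SchedInstance.tasks, Finset.mem_Icc]; omega
  have ht1 : ∀ i ∈ I.tasks, 1 ≤ I.t i := by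
    intro i hi
    rw [← htn]
    rw [SchedInstance.tasks, Finset.mem_Icc] at hi
    exact I.tsorted i I.n hi.1 hi.2 (le_refl _)
  obtain ⟨hsplit1, hsplit2⟩ := I.load_lpt_split (by omega)
  -- Fact (a): every machine's completion cost for the last task is at least c
  have hA_ineq : ∀ p ∈ I.procs, c * I.s p ≤ I.lptW (I.n - 1) p + 1 := by
    by_contra hcon
    push_neg at hcon
    obtain ⟨p₀, hp₀, hp₀lt⟩ := hcon
    obtain ⟨pc, hpc, hpc_eq⟩ :
        ∃ pc ∈ I.procs, c = I.load I.lptA pc / I.s pc := by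
      obtain ⟨pc, hpc, he⟩ :=
        Finset.exists_mem_eq_sup' I.procs_nonempty (fun p => I.load I.lptA p / I.s p)
      exact ⟨pc, hpc, by rw [hcdef, SchedInstance.lptTime, SchedInstance.makespan, he]⟩
    have hqmem : I.lptA I.n ∈ I.procs := I.choose_mem _ _
    have hcostq : (I.lptW (I.n - 1) (I.lptA I.n) + I.t I.n) / I.s (I.lptA I.n) < c := by
      have h1 : I.cost (I.lptW (I.n - 1)) I.n (I.lptA I.n)
          ≤ I.cost (I.lptW (I.n - 1)) I.n p₀ := I.cost_choose_le _ _ hp₀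
      rw [SchedInstance.cost_def, SchedInstance.cost_def] at h1
      have h2 : (I.lptW (I.n - 1) p₀ + I.t I.n) / I.s p₀ < c := by
        rw [div_lt_iff₀ (I.spos hp₀), htn]
        linarith
      exact lt_of_le_of_lt h1 h2
    have hpcq : pc ≠ I.lptA I.n := by
      intro h
      rw [h, hsplit1] at hpc_eq
      exact absurd (hpc_eq ▸ hcostq) (lt_irrefl c)
    have hpcload : I.load I.lptA pc = I.lptW (I.n - 1) pc := hsplit2 pc hpcq
    set J := I.trunc hn2 with hJ
    have hJtime : c ≤ J.lptTime := by
      have he1 : J.load J.lptA pc = I.lptW (I.n - 1) pc := I.trunc_load_lpt hn2 pc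
      have hpc' : pc ∈ J.procs := by rw [SchedInstance.trunc_procs]; exact hpc
      calc c = I.load I.lptA pc / I.s pc := hpc_eq
        _ = J.load J.lptA pc / J.s pc := by
            rw [hpcload, ← he1]; rfl
        _ ≤ J.lptTime := J.le_makespan hpc'
    have hJopt : J.opt ≤ 1 := by
      have hJsched : J.IsSchedule A := by
        intro i hi
        rw [SchedInstance.trunc_tasks, Finset.mem_Icc] at hi
        have : i ∈ I.tasks := by rw [SchedInstance.tasks, Finset.mem_Icc]; omega
        exact hAsched i this
      refine le_trans (J.opt_le hJsched) ?_
      rw [SchedInstance.makespan]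
      apply Finset.sup'_le
      intro p hp
      have hp' : p ∈ I.procs := by rw [← SchedInstance.trunc_procs I hn2]; exact hp
      have hle : J.load A p ≤ I.load A p := by
        apply Finset.sum_le_sum_of_subset_of_nonneg
        · apply Finset.filter_subset_filter
          rw [SchedInstance.trunc_tasks, SchedInstance.tasks]
          apply Finset.Icc_subset_Icc_right
          omega
        · intro i hi _
          exact (I.tpos (Finset.mem_filter.mp hi).1).le
      have h2 := hloadle p hp'
      have h3 : (0:ℝ) < J.s p := I.spos hp'
      rw [div_le_one h3]
      calc J.load A p ≤ I.load A p := hle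
        _ ≤ I.s p := h2
        _ = J.s p := rfl
    have hJratio : c ≤ J.ratio := SchedInstance.ratio_ge (by linarith) hJtime hJopt
    have hJlt := hmin J (le_refl _) (by show I.n - 1 ≤ I.n; omega)
      (by rintro ⟨-, h2⟩; revert h2; show I.n - 1 = I.n → False; omega)
    rw [hratio] at hJlt
    linarith
  by_cases hE : ∃ p ∈ I.procs, I.lptW (I.n - 1) p = 0
  · -- some machine is empty before the last task: delete the slowest machine
    obtain ⟨pe, hpe, hpe0⟩ := hE
    have hprop : ∀ q, q ∈ I.procs → pe ≤ q → I.lptW (I.n - 1) q = 0 := by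
      intro q hq hle
      rcases eq_or_lt_of_le hle with rfl | hlt
      · exact hpe0
      · have key : ∀ k, k ≤ I.n - 1 → I.lptW k q = 0 := by
          intro k
          induction k with
          | zero => intro _; rfl
          | succ k ih =>
            intro hk
            rw [SchedInstance.lptW_succ, ih (by omega), zero_add]
            split
            next hcond =>
              exfalso
              obtain ⟨hchq, hkn⟩ := hcond
              have hkpe : I.lptW k pe = 0 := by
                have h1 : I.lptW k pe ≤ I.lptW (I.n - 1) pe := I.lptW_mono (by omega) pe
                have h2 := I.lptW_nonneg k pe
                rw [hpe0] at h1
                linarith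
              have hkq : I.lptW k q = 0 := ih (by omega)
              have hsq : 0 < I.s q := I.spos hq
              have hsp : 0 < I.s pe := I.spos hpe
              have hss : I.s q ≤ I.s pe := by
                rw [SchedInstance.procs, Finset.mem_Icc] at hpe hq
                exact hssort pe q hpe.1 hlt.le hq.2
              have htk : 0 < I.t (k + 1) := I.ht (k + 1) (by omega) hkn
              have hcple : I.cost (I.lptW k) (k + 1) pe ≤ I.cost (I.lptW k) (k + 1) q := by
                rw [SchedInstance.cost_def, SchedInstance.cost_def, hkpe, hkq, zero_add]
                exact div_le_div_of_nonneg_left htk.le hsq hss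
              have hle2 : I.cost (I.lptW k) (k + 1) pe
                  ≤ I.cost (I.lptW k) (k + 1) (I.choose (I.lptW k) (k + 1)) := by
                rw [hchq]; exact hcple
              have := I.choose_le (I.lptW k) (k + 1) hpe hle2
              rw [hchq] at this
              omega
            next => rfl
        exact key (I.n - 1) (le_refl _)
    have hmm : I.m ∈ I.procs := by
      rw [SchedInstance.procs, Finset.mem_Icc]; omega
    have hEm : I.lptW (I.n - 1) I.m = 0 := by
      apply hprop I.m hmm
      rw [SchedInstance.procs, Finset.mem_Icc] at hpe
      exact hpe.2
    have hsm : c * I.s I.m ≤ 1 := by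
      have h := hA_ineq I.m hmm
      rw [hEm] at h
      linarith
    have hsmpos : 0 < I.s I.m := I.spos hmm
    have hsm1 : I.s I.m < 1 := by nlinarith
    have hm2 : 2 ≤ I.m := by
      by_contra hcon
      have hml : I.m = 1 := by omega
      have hp1 : I.lptA 1 ∈ I.procs := I.choose_mem _ _
      have hA1 : I.lptA 1 = 1 := by
        rw [SchedInstance.procs, hml, Finset.mem_Icc] at hp1
        omega
      have h01 := I.lptA_pos_load (le_refl 1) (by omega)
      have h02 := I.lptW_mono (show 1 ≤ I.n - 1 by omega) (I.lptA 1)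
      rw [hA1] at h01 h02
      rw [hml] at hEm
      rw [hEm] at h02
      linarith
    have hAnm : ∀ i ∈ I.tasks, A i ≠ I.m := by
      intro i hi hAi
      have h1 := hfit i hi
      rw [hAi] at h1
      have h2 := ht1 i hi
      linarith
    have hH : ∀ j, 1 ≤ j → j ≤ I.n - 1 → I.lptA j ≠ I.m := by
      intro j hj1 hj2 hAj
      have h1 := I.lptA_pos_load hj1 (by omega)
      rw [hAj] at h1
      have h2 := I.lptW_mono (show j ≤ I.n - 1 by omega) I.m
      rw [hEm] at h2
      linarith
    set J := I.wom hm2 with hJ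
    have hsim : ∀ p, J.lptW (I.n - 1) p = I.lptW (I.n - 1) p := by
      intro p
      exact I.wom_lptW hm2 hH (I.n - 1) (le_refl _) p
    set q' := J.lptA I.n with hq'def
    have hq'mem : q' ∈ J.procs := J.choose_mem _ _
    have hq'memI : q' ∈ I.procs := by
      have := hq'mem
      rw [SchedInstance.wom_procs] at this
      exact Finset.mem_of_mem_erase this
    have hload_q' : J.load J.lptA q' = I.lptW (I.n - 1) q' + 1 := by
      have h := (J.load_lpt_split (show 1 ≤ J.n from by show 1 ≤ I.n; omega)).1
      have hJn : J.n = I.n := rfl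
      rw [hJn] at h
      rw [← hq'def] at h
      rw [h, hsim q', show J.t I.n = I.t I.n from rfl, htn]
    have hJtime : c ≤ J.lptTime := by
      have h1 := hA_ineq q' hq'memI
      calc c ≤ (I.lptW (I.n - 1) q' + 1) / I.s q' := by
            rw [le_div_iff₀ (I.spos hq'memI)]
            linarith
        _ = J.load J.lptA q' / J.s q' := by rw [hload_q']; rfl
        _ ≤ J.lptTime := J.le_makespan hq'mem
    have hJopt : J.opt ≤ 1 := by
      have hJsched : J.IsSchedule A := by
        intro i hi
        rw [SchedInstance.wom_tasks] at hi
        rw [SchedInstance.wom_procs, Finset.mem_erase]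
        exact ⟨hAnm i hi, hAsched i hi⟩
      refine le_trans (J.opt_le hJsched) ?_
      rw [SchedInstance.makespan]
      apply Finset.sup'_le
      intro p hp
      have hpI : p ∈ I.procs := by
        rw [SchedInstance.wom_procs] at hp
        exact Finset.mem_of_mem_erase hp
      have hsp : (0:ℝ) < J.s p := I.spos hpI
      rw [div_le_one hsp]
      calc J.load A p = I.load A p := by rw [SchedInstance.wom_load]
        _ ≤ I.s p := hloadle p hpI
        _ = J.s p := rfl
    have hJratio : c ≤ J.ratio := SchedInstance.ratio_ge (by linarith) hJtime hJopt
    have hJlt := hmin J (show I.m - 1 ≤ I.m by omega) (le_refl _)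
      (by rintro ⟨h1, -⟩; revert h1; show I.m - 1 = I.m → False; omega)
    rw [hratio] at hJlt
    linarith
  · -- every machine holds exactly one of the first n-1 tasks
    push_neg at hE
    have hw'sum : ∀ p, I.lptW (I.n - 1) p
        = ∑ i ∈ (Finset.Icc 1 (I.n - 1)).filter (fun i => I.lptA i = p), I.t i := by
      intro p
      rw [SchedInstance.lptW_eq_sum, min_eq_left (show I.n - 1 ≤ I.n by omega)]
    have hIccsub : Finset.Icc 1 (I.n - 1) ⊆ I.tasks := by
      rw [SchedInstance.tasks]
      apply Finset.Icc_subset_Icc_right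
      omega
    have hSne : ∀ p ∈ I.procs,
        ((Finset.Icc 1 (I.n - 1)).filter (fun i => I.lptA i = p)).Nonempty := by
      intro p hp
      rcases Finset.eq_empty_or_nonempty
        ((Finset.Icc 1 (I.n - 1)).filter (fun i => I.lptA i = p)) with he | h
      · exfalso
        apply hE p hp
        rw [hw'sum, he, Finset.sum_empty]
      · exact h
    have hcards : ∑ p ∈ I.procs,
        ((Finset.Icc 1 (I.n - 1)).filter (fun i => I.lptA i = p)).card = I.m := by
      have hmaps : ∀ i ∈ Finset.Icc 1 (I.n - 1), I.lptA i ∈ I.procs := by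
        intro i _
        exact I.choose_mem _ _
      have h := Finset.card_eq_sum_card_fiberwise hmaps
      rw [← h, Nat.card_Icc]
      omega
    have hprocscard : I.procs.card = I.m := by
      rw [SchedInstance.procs, Nat.card_Icc]; omega
    have hcard1 : ∀ p ∈ I.procs,
        ((Finset.Icc 1 (I.n - 1)).filter (fun i => I.lptA i = p)).card = 1 := by
      by_contra hcon
      push_neg at hcon
      obtain ⟨p₁, hp₁, hne1⟩ := hcon
      have hlt : ∑ p ∈ I.procs, 1 < ∑ p ∈ I.procs,
          ((Finset.Icc 1 (I.n - 1)).filter (fun i => I.lptA i = p)).card := by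
        apply Finset.sum_lt_sum
        · intro p hp
          exact (hSne p hp).card_pos
        · refine ⟨p₁, hp₁, ?_⟩
          have := (hSne p₁ hp₁).card_pos
          omega
      rw [Finset.sum_const, smul_eq_mul, mul_one, hprocscard, hcards] at hlt
      omega
    have hτex : ∀ p ∈ I.procs, ∃ i,
        (Finset.Icc 1 (I.n - 1)).filter (fun j => I.lptA j = p) = {i} :=
      fun p hp => Finset.card_eq_one.mp (hcard1 p hp)
    choose! τ hτspec using hτex
    have hτmem : ∀ p ∈ I.procs, τ p ∈ Finset.Icc 1 (I.n - 1) ∧ I.lptA (τ p) = p := by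
      intro p hp
      have hm' : τ p ∈ (Finset.Icc 1 (I.n - 1)).filter (fun j => I.lptA j = p) := by
        rw [hτspec p hp]
        exact Finset.mem_singleton_self _
      exact Finset.mem_filter.mp hm'
    have hw't : ∀ p ∈ I.procs, I.lptW (I.n - 1) p = I.t (τ p) := by
      intro p hp
      rw [hw'sum, hτspec p hp, Finset.sum_singleton]
    -- the single-task and two-task inequalities, via the optimal schedule
    have hstep : ∀ i ∈ I.tasks, c * I.t i ≤ I.t (τ (A i)) + 1 := by
      intro i hi
      have h1 := hfit i hi
      have h2 := hA_ineq (A i) (hAsched i hi)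
      rw [hw't (A i) (hAsched i hi)] at h2
      have h3 : c * I.t i ≤ c * I.s (A i) :=
        mul_le_mul_of_nonneg_left h1 (by linarith)
      linarith
    have hcoll : ∀ i ∈ I.tasks, ∀ j ∈ I.tasks, i ≠ j → A i = A j →
        c * (I.t i + I.t j) ≤ I.t (τ (A i)) + 1 := by
      intro i hi j hj hij hAij
      have h1 : I.t i + I.t j ≤ I.load A (A i) := I.pair_le_load hi hj hij rfl hAij.symm
      have h2 := hloadle (A i) (hAsched i hi)
      have h3 := hA_ineq (A i) (hAsched i hi)
      rw [hw't (A i) (hAsched i hi)] at h3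
      have h4 : c * (I.t i + I.t j) ≤ c * I.s (A i) :=
        mul_le_mul_of_nonneg_left (le_trans h1 h2) (by linarith)
      linarith
    -- iterate the optimal-assignment map
    set F : ℕ → ℕ := fun i => τ (A i) with hF
    set u : ℕ → ℕ := fun r => F^[r] I.n with hu
    have hu0 : u 0 = I.n := rfl
    have husucc : ∀ r, u (r + 1) = τ (A (u r)) := by
      intro r
      have : u (r + 1) = F (u r) := Function.iterate_succ_apply' F r I.n
      rw [this, hF]
    have hutask : ∀ r, u r ∈ I.tasks ∧ (1 ≤ r → u r ∈ Finset.Icc 1 (I.n - 1)) := by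
      intro r
      induction r with
      | zero => exact ⟨hntask, by omega⟩
      | succ r ih =>
        have h2 : A (u r) ∈ I.procs := hAsched _ ih.1
        have h3 : τ (A (u r)) ∈ Finset.Icc 1 (I.n - 1) := (hτmem _ h2).1
        refine ⟨?_, fun _ => by rw [husucc]; exact h3⟩
        rw [husucc]
        exact hIccsub h3
    have hpig : ∃ r1 ∈ Finset.Icc 1 (I.m + 1), ∃ r2 ∈ Finset.Icc 1 (I.m + 1),
        r1 ≠ r2 ∧ u r1 = u r2 := by
      apply Finset.exists_ne_map_eq_of_card_lt_of_maps_to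
        (t := Finset.Icc 1 (I.n - 1))
      · rw [Nat.card_Icc, Nat.card_Icc]; omega
      · intro r hr
        rw [Finset.mem_coe, Finset.mem_Icc] at hr
        exact (hutask r).2 (by omega)
    obtain ⟨r1, hr1, r2, hr2, hr12, hueq⟩ := hpig
    rw [Finset.mem_Icc] at hr1 hr2
    have hQex : ∃ b, 1 ≤ b ∧ ∃ a, a < b ∧ u a = u b := by
      rcases Nat.lt_or_ge r1 r2 with h | h
      · exact ⟨r2, by omega, r1, h, hueq⟩
      · exact ⟨r1, by omega, r2, by omega, hueq.symm⟩
    classical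
    obtain ⟨hb1, a, hab, huab⟩ := Nat.find_spec hQex
    set b := Nat.find hQex with hbdef
    have hbleaux : b ≤ I.m + 1 := by
      rcases Nat.lt_or_ge r1 r2 with h | h
      · exact le_trans (Nat.find_min' hQex ⟨by omega, r1, h, hueq⟩) (by omega)
      · exact le_trans (Nat.find_min' hQex ⟨by omega, r2, by omega, hueq.symm⟩) (by omega)
    have ha1 : 1 ≤ a := by
      by_contra hcon
      have ha0 : a = 0 := by omega
      rw [ha0, hu0] at huab
      have hub := (hutask b).2 (by omega)
      rw [← huab, Finset.mem_Icc] at hub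
      omega
    have hne2 : u (a - 1) ≠ u (b - 1) := by
      intro heq
      exact Nat.find_min hQex (show b - 1 < b by omega)
        ⟨by omega, a - 1, by omega, heq⟩
    have hτa : τ (A (u (a - 1))) = u a := by
      have h := husucc (a - 1)
      rw [show a - 1 + 1 = a from by omega] at h
      exact h.symm
    have hτb : τ (A (u (b - 1))) = u b := by
      have h := husucc (b - 1)
      rw [show b - 1 + 1 = b from by omega] at h
      exact h.symm
    have hmacheq : A (u (b - 1)) = A (u (a - 1)) := by
      have hpa : A (u (a - 1)) ∈ I.procs := hAsched _ (hutask _).1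
      have hpb : A (u (b - 1)) ∈ I.procs := hAsched _ (hutask _).1
      have hinj : τ (A (u (b - 1))) = τ (A (u (a - 1))) := by
        rw [hτa, hτb, huab]
      rw [← (hτmem _ hpa).2, ← (hτmem _ hpb).2, hinj]
    -- the chain inequality along the cycle
    have hchain : ∀ r, c ^ r * I.t (u a)
        ≤ I.t (u (a + r)) + ∑ j ∈ Finset.range r, c ^ j := by
      intro r
      induction r with
      | zero => simp
      | succ r ih =>
        have hstep' : c * I.t (u (a + r)) ≤ I.t (u (a + r + 1)) + 1 := by
          have h1 := hstep (u (a + r)) (hutask (a + r)).1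
          rw [← husucc (a + r)] at h1
          exact h1
        calc c ^ (r + 1) * I.t (u a) = c * (c ^ r * I.t (u a)) := by ring
          _ ≤ c * (I.t (u (a + r)) + ∑ j ∈ Finset.range r, c ^ j) :=
              mul_le_mul_of_nonneg_left ih (by linarith)
          _ = c * I.t (u (a + r)) + c * ∑ j ∈ Finset.range r, c ^ j := by ring
          _ ≤ I.t (u (a + r + 1)) + 1 + c * ∑ j ∈ Finset.range r, c ^ j := by linarith
          _ = I.t (u (a + (r + 1))) + ∑ j ∈ Finset.range (r + 1), c ^ j := by
              rw [geom_sum_succ, show a + (r + 1) = a + r + 1 from rfl]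
              ring
    have hclose : c * (I.t (u (b - 1)) + I.t (u (a - 1))) ≤ I.t (u a) + 1 := by
      have h := hcoll (u (b - 1)) (hutask _).1 (u (a - 1)) (hutask _).1 hne2.symm hmacheq
      rw [hτb, ← huab] at h
      exact h
    have hX1 : 1 ≤ I.t (u (b - 1)) := ht1 _ (hutask _).1
    have hj1 : 1 ≤ I.t (u (a - 1)) := ht1 _ (hutask _).1
    obtain ⟨k', hk'⟩ : ∃ k', b = a + k' + 1 := ⟨b - a - 1, by omega⟩
    have hGk : 2 * c ^ (k' + 1) ≤ (∑ j ∈ Finset.range (k' + 1), c ^ j) + 1 := by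
      rw [Finset.sum_range_succ]
      apply alg_Gk c (I.t (u (b - 1))) (I.t (u a)) k' _ hc1 hX1
      · have h := hchain k'
        rw [show a + k' = b - 1 from by omega] at h
        exact h
      · nlinarith
    have hc32 : c ≤ 3 / 2 := alg_c_le c (k' + 1) (by omega) hc1 hGk
    have hGm := alg_Gm c (k' + 1) I.m (by omega) (by omega) hc1 hc32 hGk
    have hPmc : Pm I.m c ≤ 0 := Pm_le_zero_of c I.m I.hm hGm
    exact le_root_of_Pm c ρ I.m I.hm (by linarith) hρpos hPmc hρroot

/-- If `I = (m, m+1, s, t)` is a minimal normalized instance, then its LPT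
approximation ratio is at most `ρ_m`, the unique positive root of `P_m`. -/
theorem ratio_le_rho_of_minimal_m_add_one (I : SchedInstance) (hn : I.n = I.m + 1)
    (hnorm : I.Normalized) (hmin : I.Minimal)
    (ρ : ℝ) (hρpos : 0 < ρ) (hρroot : Pm I.m ρ = 0) :
    I.ratio ≤ ρ := by
  exact ratio_le_rho_of_minimal_m_add_one' I hn hnorm hmin ρ hρpos hρroot
end

section
/- Let ρ_m denote the unique positive real root of P_m. Then the sequence (ρ_m)_{m≥1} is strictly increasing, i.e., ρ_m > ρ_{m'} whenever m > m' ≥ 1, and moreover ρ_m < 3/2 for every m ≥ 1. -/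
open Finset

lemma geom_aux (x : ℝ) : ∀ m : ℕ, 1 ≤ m →
    (x - 1) * (∑ k ∈ Finset.Ico 1 m, x ^ k) = x ^ m - x := by
  intro m
  induction m with
  | zero => intro h; omega
  | succ n ih =>
    intro _
    rcases Nat.eq_or_lt_of_le (Nat.one_le_iff_ne_zero.mpr (by omega) : 1 ≤ n + 1) with h | h
    · simp [← h]
    · have hn : 1 ≤ n := by omega
      rw [Finset.sum_Ico_succ_top hn, mul_add, ih hn]
      ring

lemma Pm_succ (m : ℕ) (hm : 1 ≤ m) (x : ℝ) :
    Pm (m + 1) x = Pm m x + x ^ m * (2 * x - 3) := by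
  unfold Pm
  rw [Finset.sum_Ico_succ_top hm]
  ring

lemma Pm_lt_of_lt {m' m : ℕ} (hm' : 1 ≤ m') (h : m' < m) {x : ℝ} (hx : 0 < x)
    (hx2 : x < 3 / 2) : Pm m x < Pm m' x := by
  induction m with
  | zero => omega
  | succ n ih =>
    have hxm : 0 < x ^ n := pow_pos hx n
    rcases Nat.lt_or_ge m' n with hlt | hge
    · have := ih hlt
      have hs := Pm_succ n (by omega) x
      nlinarith
    · have : m' = n := by omega
      subst this
      rw [Pm_succ m' hm' x]
      nlinarith

lemma Pm_lt_three_halves (m : ℕ) (hm : 1 ≤ m) (ρ : ℝ) (hρ : 0 < ρ)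
    (hP : Pm m ρ = 0) : ρ < 3 / 2 := by
  by_contra hc
  push_neg at hc
  have h1 : (1 : ℝ) ≤ ρ := by linarith
  have hg := geom_aux ρ m hm
  have key : (ρ - 1) * Pm m ρ = ρ ^ m * (2 * ρ - 3) + (2 - ρ) := by
    unfold Pm
    linear_combination -hg
  have hpow : ρ ≤ ρ ^ m := le_self_pow₀ h1 (by omega)
  have h23 : 0 ≤ 2 * ρ - 3 := by linarith
  have : (ρ - 1) * Pm m ρ ≥ ρ * (2 * ρ - 3) + (2 - ρ) := by nlinarith
  rw [hP] at this
  nlinarith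

lemma Pm_cross {m : ℕ} {a b : ℝ} (ha : 0 < a) (hab : a ≤ b) :
    b ^ m * Pm m a ≤ a ^ m * Pm m b := by
  have hb : 0 < b := lt_of_lt_of_le ha hab
  have e1 : a ^ m * Pm m b - b ^ m * Pm m a =
      (∑ k ∈ Finset.Ico 1 m, (b ^ m * a ^ k - a ^ m * b ^ k)) + 2 * (b ^ m - a ^ m) := by
    rw [Finset.sum_sub_distrib, ← Finset.mul_sum, ← Finset.mul_sum]
    unfold Pm
    ring
  have hterm : ∀ k ∈ Finset.Ico 1 m, (0:ℝ) ≤ b ^ m * a ^ k - a ^ m * b ^ k := by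
    intro k hk
    obtain ⟨hk1, hk2⟩ := Finset.mem_Ico.mp hk
    have hkm : k ≤ m := le_of_lt hk2
    obtain ⟨j, rfl⟩ := Nat.exists_eq_add_of_le hkm
    have e2 : b ^ (k + j) * a ^ k - a ^ (k + j) * b ^ k
        = a ^ k * b ^ k * (b ^ j - a ^ j) := by
      rw [pow_add, pow_add]; ring
    rw [e2]
    have hle : a ^ j ≤ b ^ j := pow_le_pow_left₀ ha.le hab _
    have : (0:ℝ) ≤ a ^ k * b ^ k := by positivity
    nlinarith
  have hsum : (0:ℝ) ≤ ∑ k ∈ Finset.Ico 1 m, (b ^ m * a ^ k - a ^ m * b ^ k) :=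
    Finset.sum_nonneg hterm
  have hpow : a ^ m ≤ b ^ m := pow_le_pow_left₀ ha.le hab m
  linarith

/-- The sequence of unique positive roots `ρ_m` of `P_m` is strictly
increasing in `m`, and every `ρ_m` is less than `3/2`. -/
theorem rho_strictMono_and_lt_three_halves :
    (∀ m m' : ℕ, 1 ≤ m' → m' < m →
      ∀ ρ ρ' : ℝ, 0 < ρ → Pm m ρ = 0 → 0 < ρ' → Pm m' ρ' = 0 → ρ' < ρ) ∧
    (∀ m : ℕ, 1 ≤ m → ∀ ρ : ℝ, 0 < ρ → Pm m ρ = 0 → ρ < 3 / 2) := by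
  constructor
  · intro m m' hm' hlt ρ ρ' hρ hPρ hρ' hPρ'
    have hρ'32 : ρ' < 3 / 2 := Pm_lt_three_halves m' hm' ρ' hρ' hPρ'
    have hneg : Pm m ρ' < 0 := by
      have := Pm_lt_of_lt hm' hlt hρ' hρ'32
      rw [hPρ'] at this
      exact this
    by_contra hc
    push_neg at hc
    have hcross := Pm_cross (m := m) hρ hc
    rw [hPρ] at hcross
    have : ρ ^ m * Pm m ρ' < 0 := mul_neg_of_pos_of_neg (pow_pos hρ m) hneg
    simp at hcross
    linarith
  · exact Pm_lt_three_halves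
end
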